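/- Greedy diversity is optimal stepwise: with the and-or explanation tree T for p w.r.t. Π and X, define R_0 = ∅ and iteratively let K_i be an explanation tree maximizing Δ_D(R_{i-1}, RVertices(K_i)) = |RVertices(K_i) \ R_{i-1}|, setting R_i = R_{i-1} ∪ RVertices(K_i). Then at each iteration i, the explanation extracted by selecting for each atom vertex a child of maximum W_{T,R_{i-1}}-weight (where atom vertices take max of children, rule vertices take sum of children plus 1 if not in R_{i-1}, plus 0 otherwise) achieves the maximum possible distance Δ_D(R_{i-1}, ·) among all explanation trees in T. -/

import Mathlib

/-- A ground normal rule: head atom, positive body atoms, negative body atoms. -/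
structure Rule (α : Type) where
  head : α
  pos : Finset α
  neg : Finset α

/-- Finite rose trees with vertex labels in `L`; a vertex of a tree is identified
with the subtree hanging from it. -/
inductive RTree (L : Type) : Type
  | node : L → List (RTree L) → RTree L

namespace RTree

def label {L : Type} : RTree L → L
  | node l _ => l

def children {L : Type} : RTree L → List (RTree L)
  | node _ cs => cs

/-- The list of all vertices (subtree occurrences) of a tree. -/
def occs {L : Type} : RTree L → List (RTree L)
  | node l cs => node l cs :: (cs.attach.map (fun c => occs c.1)).flatten
decreasing_by
  have := List.sizeOf_lt_of_mem c.2
  simp only [RTree.node.sizeOf_spec]; omega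

end RTree

/-- Rule `r` supports atom `p` using atoms in `X` but not in `Z`:
`H(r) = p`, `B⁺(r) ⊆ X \ Z` and `B⁻(r) ∩ X = ∅`. -/
def Supports {α : Type} (X Z : Set α) (r : Rule α) (p : α) : Prop :=
  r.head = p ∧ ↑r.pos ⊆ X \ Z ∧ ∀ a ∈ r.neg, a ∉ X

/-- `IsAOTNode P X Z t`: `t` is (a node of) the and-or explanation tree w.r.t.
program `P` and answer set `X`, where `Z` is the set of atoms labeling the
ancestor atom vertices.  An atom vertex labeled `p` has one rule-vertex child for
each rule of `P` supporting `p` using atoms in `X` but not in `insert p Z` (and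
only such children), and has at least one child (so that every leaf is a rule
vertex); a rule vertex labeled `r` has one atom-vertex child for each atom of
`B⁺(r)` (and only such children). -/
inductive IsAOTNode {α : Type} (P : Set (Rule α)) (X : Set α) :
    Set α → RTree (α ⊕ Rule α) → Prop
  | atom {Z : Set α} {p : α} {cs : List (RTree (α ⊕ Rule α))}
      (hp : p ∈ X) (hne : cs ≠ [])
      (hcomplete : ∀ r ∈ P, Supports X (insert p Z) r p →
        ∃ c ∈ cs, RTree.label c = Sum.inr r)
      (hsound : ∀ c ∈ cs,
        ∃ r ∈ P, Supports X (insert p Z) r p ∧ RTree.label c = Sum.inr r)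
      (hrec : ∀ c ∈ cs, IsAOTNode P X (insert p Z) c) :
      IsAOTNode P X Z (.node (.inl p) cs)
  | rule {Z : Set α} {r : Rule α} {cs : List (RTree (α ⊕ Rule α))}
      (hcomplete : ∀ a ∈ r.pos, ∃ c ∈ cs, RTree.label c = Sum.inl a)
      (hsound : ∀ c ∈ cs, ∃ a ∈ r.pos, RTree.label c = Sum.inl a)
      (hrec : ∀ c ∈ cs, IsAOTNode P X Z c) :
      IsAOTNode P X Z (.node (.inr r) cs)

open Classical in
/-- The difference weight `W_{T,R}` relative to a set `R` of rule (and-) vertices: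
an atom (or-) vertex gets the maximum of its children's weights; a rule (and-)
vertex gets the sum of its children's weights, plus 1 if it does not belong to
`R` and plus 0 if it does. -/
noncomputable def wdiff {α ρ : Type} (R : Set (RTree (α ⊕ ρ))) : RTree (α ⊕ ρ) → ℕ
  | .node (.inl _) cs => ((cs.attach.map (fun c => wdiff R c.1)).foldr max 0)
  | .node (.inr r) cs => (cs.attach.map (fun c => wdiff R c.1)).sum +
      (if RTree.node (.inr r) cs ∈ R then 0 else 1)
decreasing_by
  all_goals (have := List.sizeOf_lt_of_mem c.2; simp only [RTree.node.sizeOf_spec]; omega)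

/-- `Sel T V`: `V` is the set of rule (and-) vertices of some explanation tree
(solution subtree) of the and-or tree `T`: at each atom (or-) vertex one child is
chosen, at each rule vertex all children are kept, and `V` collects the rule
vertices (as vertices of `T`) that are visited. -/
inductive Sel {α ρ : Type} : RTree (α ⊕ ρ) → Set (RTree (α ⊕ ρ)) → Prop
  | atom {a : α} {cs : List (RTree (α ⊕ ρ))} {c : RTree (α ⊕ ρ)} {V : Set (RTree (α ⊕ ρ))} :
      c ∈ cs → Sel c V → Sel (.node (.inl a) cs) V
  | rule {r : ρ} {cs : List (RTree (α ⊕ ρ))} (f : RTree (α ⊕ ρ) → Set (RTree (α ⊕ ρ)))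
      (h : ∀ c ∈ cs, Sel c (f c)) :
      Sel (.node (.inr r) cs) (insert (.node (.inr r) cs) (⋃ c ∈ cs, f c))

/-- `MaxSel R T V`: `V` is the set of rule vertices of the explanation tree
extracted by selecting, at each atom (or-) vertex, a child of maximum
`wdiff R`-weight, and at each rule vertex all children. -/
inductive MaxSel {α ρ : Type} (R : Set (RTree (α ⊕ ρ))) :
    RTree (α ⊕ ρ) → Set (RTree (α ⊕ ρ)) → Prop
  | atom {a : α} {cs : List (RTree (α ⊕ ρ))} {c : RTree (α ⊕ ρ)} {V : Set (RTree (α ⊕ ρ))} :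
      c ∈ cs → (∀ c' ∈ cs, wdiff R c' ≤ wdiff R c) → MaxSel R c V →
      MaxSel R (.node (.inl a) cs) V
  | rule {r : ρ} {cs : List (RTree (α ⊕ ρ))} (f : RTree (α ⊕ ρ) → Set (RTree (α ⊕ ρ)))
      (h : ∀ c ∈ cs, MaxSel R c (f c)) :
      MaxSel R (.node (.inr r) cs) (insert (.node (.inr r) cs) (⋃ c ∈ cs, f c))

section AuxLemmas

variable {α ρ : Type}

lemma occs_eq {L : Type} (l : L) (cs : List (RTree L)) :
    RTree.occs (.node l cs) = .node l cs :: (cs.map RTree.occs).flatten := by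
  rw [RTree.occs]; simp

lemma self_mem_occs {L : Type} (t : RTree L) : t ∈ t.occs := by
  cases t with
  | node l cs => rw [occs_eq]; exact List.mem_cons_self

lemma mem_occs_of_child {L : Type} {c : RTree L} {cs : List (RTree L)} (l : L)
    (hc : c ∈ cs) {v : RTree L} (hv : v ∈ c.occs) : v ∈ (RTree.node l cs).occs := by
  rw [occs_eq]
  exact List.mem_cons_of_mem _ (List.mem_flatten.2 ⟨c.occs, List.mem_map_of_mem hc, hv⟩)

open Classical in
lemma wdiff_inl (R : Set (RTree (α ⊕ ρ))) (a : α) (cs : List (RTree (α ⊕ ρ))) :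
    wdiff R (.node (.inl a) cs) = (cs.map (wdiff R)).foldr max 0 := by
  rw [wdiff]; simp

open Classical in
lemma wdiff_inr (R : Set (RTree (α ⊕ ρ))) (r : ρ) (cs : List (RTree (α ⊕ ρ))) :
    wdiff R (.node (.inr r) cs) = (cs.map (wdiff R)).sum +
      (if RTree.node (.inr r) cs ∈ R then 0 else 1) := by
  rw [wdiff]; simp

lemma le_foldr_max {l : List ℕ} {a : ℕ} (h : a ∈ l) : a ≤ l.foldr max 0 := by
  induction l with
  | nil => simp at h
  | cons b t ih =>
    rcases List.mem_cons.1 h with h | h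
    · simp [h, le_max_iff]
    · simp [le_max_iff, ih h]

lemma foldr_max_le {l : List ℕ} {b : ℕ} (h : ∀ a ∈ l, a ≤ b) : l.foldr max 0 ≤ b := by
  induction l with
  | nil => simp
  | cons c t ih =>
    simp only [List.foldr_cons, max_le_iff]
    exact ⟨h c (by simp), ih fun a ha => h a (by simp [ha])⟩

lemma sel_subset {t : RTree (α ⊕ ρ)} {V : Set (RTree (α ⊕ ρ))} (h : Sel t V) :
    ∀ v ∈ V, v ∈ t.occs := by
  induction h with
  | atom hc _ ih =>
    exact fun v hv => mem_occs_of_child _ hc (ih v hv)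
  | rule f hsel ih =>
    intro v hv
    rcases Set.mem_insert_iff.1 hv with rfl | hv
    · exact self_mem_occs _
    · obtain ⟨c, hc, hvc⟩ := Set.mem_iUnion₂.1 hv
      exact mem_occs_of_child _ hc (ih c hc v hvc)

lemma sel_finite {t : RTree (α ⊕ ρ)} {V : Set (RTree (α ⊕ ρ))} (h : Sel t V) :
    V.Finite :=
  (t.occs.finite_toSet).subset (fun v hv => sel_subset h v hv)

lemma biUnion_cons {β γ : Type} (a : β) (l : List β) (g : β → Set γ) :
    (⋃ c ∈ (a :: l), g c) = g a ∪ ⋃ c ∈ l, g c := by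
  ext x
  simp only [Set.mem_iUnion, Set.mem_union, List.mem_cons]
  constructor
  · rintro ⟨c, (rfl | hc), hx⟩
    · exact Or.inl hx
    · exact Or.inr ⟨c, hc, hx⟩
  · rintro (hx | ⟨c, hc, hx⟩)
    · exact ⟨a, Or.inl rfl, hx⟩
    · exact ⟨c, Or.inr hc, hx⟩

lemma ncard_biUnion_le {β γ : Type} (cs : List β) (g : β → Set γ) :
    (⋃ c ∈ cs, g c).ncard ≤ (cs.map fun c => (g c).ncard).sum := by
  induction cs with
  | nil => simp
  | cons a l ih =>
    rw [biUnion_cons, List.map_cons, List.sum_cons]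
    exact le_trans (Set.ncard_union_le _ _) (add_le_add le_rfl ih)

lemma ncard_biUnion_eq {β γ : Type} (cs : List β) (g : β → Set γ)
    (hfin : ∀ c ∈ cs, (g c).Finite)
    (hdisj : cs.Pairwise fun a b => Disjoint (g a) (g b)) :
    (⋃ c ∈ cs, g c).ncard = (cs.map fun c => (g c).ncard).sum := by
  induction cs with
  | nil => simp
  | cons a l ih =>
    rw [biUnion_cons, List.map_cons, List.sum_cons]
    have hfa := hfin a (List.mem_cons_self)
    have hfl : (⋃ c ∈ l, g c).Finite :=
      Set.Finite.biUnion l.finite_toSet (fun c hc => hfin c (List.mem_cons_of_mem _ hc))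
    have hd : Disjoint (g a) (⋃ c ∈ l, g c) := by
      rw [Set.disjoint_left]
      intro x hx hx'
      obtain ⟨c, hc, hxc⟩ := Set.mem_iUnion₂.1 hx'
      exact ((List.pairwise_cons.1 hdisj).1 c hc).le_bot ⟨hx, hxc⟩
    rw [Set.ncard_union_eq hd hfa hfl,
      ih (fun c hc => hfin c (List.mem_cons_of_mem _ hc)) (List.pairwise_cons.1 hdisj).2]

lemma insert_diff_split (x : RTree (α ⊕ ρ)) (cs : List (RTree (α ⊕ ρ)))
    (f : RTree (α ⊕ ρ) → Set (RTree (α ⊕ ρ))) (R : Set (RTree (α ⊕ ρ))) :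
    (insert x (⋃ c ∈ cs, f c)) \ R = (({x} : Set _) \ R) ∪ ⋃ c ∈ cs, (f c \ R) := by
  ext y
  simp only [Set.mem_diff, Set.mem_insert_iff, Set.mem_union, Set.mem_singleton_iff,
    Set.mem_iUnion]
  tauto

lemma singleton_diff_ncard_le (x : RTree (α ⊕ ρ)) (R : Set (RTree (α ⊕ ρ))) [Decidable (x ∈ R)] :
    (({x} : Set _) \ R).ncard ≤ if x ∈ R then 0 else 1 := by
  split
  · rename_i h
    rw [Set.diff_eq_empty.2 (Set.singleton_subset_iff.2 h)]; simp
  · exact le_trans (Set.ncard_le_ncard Set.diff_subset (Set.finite_singleton _)) (by simp)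

lemma singleton_diff_ncard_eq (x : RTree (α ⊕ ρ)) (R : Set (RTree (α ⊕ ρ))) [Decidable (x ∈ R)] :
    (({x} : Set _) \ R).ncard = if x ∈ R then 0 else 1 := by
  split
  · rename_i h
    rw [Set.diff_eq_empty.2 (Set.singleton_subset_iff.2 h)]; simp
  · rename_i h
    have : ({x} : Set _) \ R = {x} := by
      ext y; simp only [Set.mem_diff, Set.mem_singleton_iff, and_iff_left_iff_imp]
      rintro rfl; exact h
    rw [this, Set.ncard_singleton]

lemma sel_ncard_le (R : Set (RTree (α ⊕ ρ))) {t : RTree (α ⊕ ρ)}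
    {V : Set (RTree (α ⊕ ρ))} (h : Sel t V) : (V \ R).ncard ≤ wdiff R t := by
  classical
  induction h with
  | atom hc _ ih =>
    rw [wdiff_inl]
    exact le_trans ih (le_foldr_max (List.mem_map_of_mem hc))
  | rule f hsel ih =>
    rename_i r cs
    rw [wdiff_inr, insert_diff_split]
    calc ((({RTree.node (Sum.inr r) cs} : Set _) \ R) ∪ ⋃ c ∈ cs, (f c \ R)).ncard
        ≤ (({RTree.node (Sum.inr r) cs} : Set _) \ R).ncard + (⋃ c ∈ cs, (f c \ R)).ncard :=
          Set.ncard_union_le _ _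
      _ ≤ (if RTree.node (Sum.inr r) cs ∈ R then 0 else 1) +
            (cs.map fun c => (f c \ R).ncard).sum :=
          add_le_add (singleton_diff_ncard_le _ _) (ncard_biUnion_le _ _)
      _ ≤ (if RTree.node (Sum.inr r) cs ∈ R then 0 else 1) + (cs.map (wdiff R)).sum :=
          add_le_add le_rfl (List.sum_le_sum fun c hc => ih c hc)
      _ = (cs.map (wdiff R)).sum + (if RTree.node (Sum.inr r) cs ∈ R then 0 else 1) :=
          add_comm _ _

lemma maxSel_spec (R : Set (RTree (α ⊕ ρ))) {t : RTree (α ⊕ ρ)}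
    {V : Set (RTree (α ⊕ ρ))} (h : MaxSel R t V) :
    t.occs.Nodup → Sel t V ∧ (V \ R).ncard = wdiff R t := by
  classical
  induction h with
  | @atom a cs c V hc hmax _ ih =>
    intro hnd
    rw [occs_eq, List.nodup_cons] at hnd
    have hflat := List.nodup_flatten.1 hnd.2
    have hndc : c.occs.Nodup := hflat.1 _ (List.mem_map_of_mem hc)
    obtain ⟨hsel, heq⟩ := ih hndc
    refine ⟨Sel.atom hc hsel, ?_⟩
    rw [wdiff_inl, heq]
    have h1 : wdiff R c ≤ (cs.map (wdiff R)).foldr max 0 :=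
      le_foldr_max (List.mem_map_of_mem hc)
    have h2 : (cs.map (wdiff R)).foldr max 0 ≤ wdiff R c := by
      refine foldr_max_le ?_
      rintro x hx
      obtain ⟨c', hc', rfl⟩ := List.mem_map.1 hx
      exact hmax c' hc'
    omega
  | @rule r cs f hms ih =>
    intro hnd
    rw [occs_eq, List.nodup_cons] at hnd
    obtain ⟨hnode, hflat0⟩ := hnd
    have hflat := List.nodup_flatten.1 hflat0
    have hrec : ∀ c ∈ cs, Sel c (f c) ∧ (f c \ R).ncard = wdiff R c :=
      fun c hc => ih c hc (hflat.1 _ (List.mem_map_of_mem hc))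
    refine ⟨Sel.rule f (fun c hc => (hrec c hc).1), ?_⟩
    set x := RTree.node (Sum.inr r) cs with hx
    have hxnot : ∀ c ∈ cs, x ∉ f c := by
      intro c hc hxf
      exact hnode (List.mem_flatten.2 ⟨c.occs, List.mem_map_of_mem hc,
        sel_subset (hrec c hc).1 x hxf⟩)
    have hoccdisj : cs.Pairwise fun a b => List.Disjoint a.occs b.occs := by
      have := hflat.2
      rwa [List.pairwise_map] at this
    have hdisj : cs.Pairwise fun a b => Disjoint (f a \ R) (f b \ R) := by
      refine List.Pairwise.imp_of_mem ?_ hoccdisj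
      intro a b ha hb hab
      rw [Set.disjoint_left]
      intro y hy hy'
      exact hab (sel_subset (hrec a ha).1 y hy.1) (sel_subset (hrec b hb).1 y hy'.1)
    have hfin : ∀ c ∈ cs, (f c \ R).Finite :=
      fun c hc => (sel_finite (hrec c hc).1).diff
    have hd : Disjoint (({x} : Set _) \ R) (⋃ c ∈ cs, (f c \ R)) := by
      rw [Set.disjoint_left]
      rintro y ⟨hy, -⟩ hy'
      obtain ⟨c, hc, hyc⟩ := Set.mem_iUnion₂.1 hy'
      rw [Set.mem_singleton_iff] at hy
      exact hxnot c hc (hy ▸ hyc.1)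
    rw [insert_diff_split, wdiff_inr,
      Set.ncard_union_eq hd ((Set.finite_singleton x).diff)
        (Set.Finite.biUnion cs.finite_toSet hfin),
      ncard_biUnion_eq cs _ hfin hdisj, singleton_diff_ncard_eq,
      List.map_congr_left (fun c hc => (hrec c hc).2), add_comm, ← hx]

end AuxLemmas

/-- Greedy diversity is optimal stepwise: in the and-or explanation tree `T` for
`p` w.r.t. `Π` and `X` (with pairwise distinct vertices), for any set `R` of
previously collected rule vertices, the explanation extracted by selecting at
each atom vertex a child of maximum `W_{T,R}`-weight achieves the maximum
possible distance `Δ_D(R, ·) = |RVertices(·) \ R|` among all explanation trees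
in `T`. -/
theorem maxSel_maximizes_distance {α : Type} (P : Set (Rule α)) (X : Set α) (p : α)
    (T : RTree (α ⊕ Rule α)) (hT : IsAOTNode P X ∅ T)
    (hroot : RTree.label T = Sum.inl p) (hnd : (RTree.occs T).Nodup)
    (R V : Set (RTree (α ⊕ Rule α))) (hV : MaxSel R T V) :
    Sel T V ∧ ∀ V', Sel T V' → (V' \ R).ncard ≤ (V \ R).ncard := by
  obtain ⟨hsel, heq⟩ := maxSel_spec R hV hnd
  exact ⟨hsel, fun V' hV' => heq ▸ sel_ncard_le R hV'⟩
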